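/- Let U, W be graphons and S : L²[0,1] → L²[0,1] a bounded operator with S 1 = 1 and S* 1 = 1. For the path P_ℓ of length ℓ, |t(P_ℓ, U) − t(P_ℓ, W)| ≤ ℓ · sup_{f,g : [0,1] → [0,1]} |⟨f, (T_U ∘ S − S ∘ T_W) g⟩|, where t(P_ℓ, U) = ⟨1, T_U^ℓ 1⟩. -/

import Mathlib

open MeasureTheory

local notation "μ01" => (volume : Measure unitInterval)

/-- The constant-one function of `L²[0,1]`. -/
noncomputable def oneL2 : Lp ℝ 2 (volume : Measure unitInterval) :=
  indicatorConstLp 2 MeasurableSet.univ (measure_ne_top _ _) (1 : ℝ)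

lemma oneL2_ae : ∀ᵐ x ∂μ01, oneL2 x = 1 := by
  filter_upwards [indicatorConstLp_coeFn (μ := μ01) (p := 2)
    (hs := MeasurableSet.univ) (hμs := measure_ne_top _ _) (c := (1:ℝ))] with x hx
  simpa [oneL2] using hx

lemma oneL2_box : ∀ᵐ x ∂μ01, oneL2 x ∈ Set.Icc (0:ℝ) 1 := by
  filter_upwards [oneL2_ae] with x hx
  rw [hx]; constructor <;> norm_num

section Kernel
variable {K : unitInterval → unitInterval → ℝ}

lemma integrable_ker_mul (hKm : Measurable (Function.uncurry K))
    (hK01 : ∀ x y, K x y ∈ Set.Icc (0:ℝ) 1) (x : unitInterval) (f : Lp ℝ 2 μ01) :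
    Integrable (fun y => K x y * f y) μ01 := by
  have hm : AEStronglyMeasurable (fun y => K x y * f y) μ01 :=
    ((hKm.comp measurable_prodMk_left).aestronglyMeasurable).mul (Lp.aestronglyMeasurable f)
  have hfi : Integrable (fun y => f y) μ01 := (Lp.memLp f).integrable (by norm_num)
  refine (hfi.abs.mono' hm ?_)
  filter_upwards with y
  rw [Real.norm_eq_abs, abs_mul]
  have h1 : |K x y| ≤ 1 := abs_le.2 ⟨by linarith [(hK01 x y).1], (hK01 x y).2⟩
  calc |K x y| * |f y| ≤ 1 * |f y| := mul_le_mul_of_nonneg_right h1 (abs_nonneg _)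
    _ = |f y| := one_mul _

lemma mapsBox (hK01 : ∀ x y, K x y ∈ Set.Icc (0:ℝ) 1) {T : Lp ℝ 2 μ01 →L[ℝ] Lp ℝ 2 μ01}
    (hT : ∀ f : Lp ℝ 2 μ01, ⇑(T f) =ᵐ[volume] fun x => ∫ y, K x y * f y)
    {f : Lp ℝ 2 μ01} (hf : ∀ᵐ x ∂μ01, f x ∈ Set.Icc (0:ℝ) 1) :
    ∀ᵐ x ∂μ01, (T f) x ∈ Set.Icc (0:ℝ) 1 := by
  filter_upwards [hT f] with x hx
  rw [hx]
  constructor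
  · apply integral_nonneg_of_ae
    filter_upwards [hf] with y hy
    exact mul_nonneg (hK01 x y).1 hy.1
  · calc ∫ y, K x y * f y ∂μ01 ≤ ∫ _, (1:ℝ) ∂μ01 := by
          apply integral_mono_of_nonneg ?_ (integrable_const 1)
          · filter_upwards [hf] with y hy
            exact mul_le_one₀ (hK01 x y).2 hy.1 hy.2
          · filter_upwards [hf] with y hy
            exact mul_nonneg (hK01 x y).1 hy.1
        _ = 1 := by simp

lemma symmSelfAdj (hKm : Measurable (Function.uncurry K))
    (hK01 : ∀ x y, K x y ∈ Set.Icc (0:ℝ) 1) (hKs : ∀ x y, K x y = K y x) {T : Lp ℝ 2 μ01 →L[ℝ] Lp ℝ 2 μ01}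
    (hT : ∀ f : Lp ℝ 2 μ01, ⇑(T f) =ᵐ[volume] fun x => ∫ y, K x y * f y)
    (f g : Lp ℝ 2 μ01) : (inner ℝ (T f) g : ℝ) = inner ℝ f (T g) := by
  have hfi : Integrable (fun y => f y) μ01 := (Lp.memLp f).integrable (by norm_num)
  have hgi : Integrable (fun y => g y) μ01 := (Lp.memLp g).integrable (by norm_num)
  have hint : Integrable (Function.uncurry fun x y => f x * (K x y * g y)) (Measure.prod μ01 μ01) := by
    have hb : Integrable (fun z : unitInterval × unitInterval => |f z.1| * |g z.2|)
        (Measure.prod μ01 μ01) := hfi.abs.mul_prod hgi.abs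
    refine hb.mono' ?_ ?_
    · exact ((Lp.aestronglyMeasurable f).comp_fst.mul
        (hKm.aestronglyMeasurable.mul (Lp.aestronglyMeasurable g).comp_snd))
    · filter_upwards with z
      rw [Real.norm_eq_abs, Function.uncurry]
      have h1 : |K z.1 z.2| ≤ 1 := abs_le.2 ⟨by linarith [(hK01 z.1 z.2).1], (hK01 z.1 z.2).2⟩
      calc |f z.1 * (K z.1 z.2 * g z.2)| = |f z.1| * (|K z.1 z.2| * |g z.2|) := by
            rw [abs_mul, abs_mul]
        _ ≤ |f z.1| * (1 * |g z.2|) := by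
            apply mul_le_mul_of_nonneg_left (mul_le_mul_of_nonneg_right h1 (abs_nonneg _))
              (abs_nonneg _)
        _ = |f z.1| * |g z.2| := by ring
  have e1 : (inner ℝ f (T g) : ℝ) = ∫ x, ∫ y, f x * (K x y * g y) ∂μ01 ∂μ01 := by
    rw [L2.inner_def]
    apply integral_congr_ae
    filter_upwards [hT g] with x hx
    rw [RCLike.inner_apply, RCLike.conj_to_real, hx, mul_comm _ (f x), ← integral_const_mul]
  have e2 : (inner ℝ (T f) g : ℝ) = ∫ y, ∫ x, f x * (K x y * g y) ∂μ01 ∂μ01 := by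
    rw [L2.inner_def]
    apply integral_congr_ae
    filter_upwards [hT f] with y hy
    rw [RCLike.inner_apply, RCLike.conj_to_real, hy, ← integral_const_mul]
    congr 1; funext x
    rw [hKs y x]; ring
  rw [e1, e2, integral_integral_swap hint]

/-- Elements of `L²[0,1]` taking values in `[0,1]` almost everywhere. -/
def box : Type :=
  {f : Lp ℝ 2 (volume : Measure unitInterval) //
    ∀ᵐ x ∂(volume : Measure unitInterval), f x ∈ Set.Icc (0 : ℝ) 1}

lemma box_norm_le_one (f : Lp ℝ 2 μ01) (hf : ∀ᵐ x ∂μ01, f x ∈ Set.Icc (0:ℝ) 1) :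
    ‖f‖ ≤ 1 := by
  have h := Lp.norm_le_of_ae_bound (μ := μ01) (f := f) (C := 1) zero_le_one ?_
  · have : (measureUnivNNReal μ01 : ℝ) = 1 := by
      simp [measureUnivNNReal, measure_univ]
    simpa [this] using h
  · filter_upwards [hf] with x hx
    rw [Real.norm_eq_abs]
    exact abs_le.2 ⟨by linarith [hx.1], hx.2⟩

/-- Counting lemma for paths: if `U, W` are graphons with integral operators `T_U, T_W` and
`S` is a bounded operator on `L²[0,1]` with `S1 = 1` and `S*1 = 1`, then for the path `P_ℓ`
of length `ℓ`,
`|t(P_ℓ,U) − t(P_ℓ,W)| ≤ ℓ · sup_{f,g : [0,1]→[0,1]} |⟨f, (T_U∘S − S∘T_W) g⟩|`,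
where `t(P_ℓ,U) = ⟨1, T_U^ℓ 1⟩`. -/
theorem stmt6 (U W : unitInterval → unitInterval → ℝ)
    (hUmeas : Measurable (Function.uncurry U)) (hWmeas : Measurable (Function.uncurry W))
    (hUsymm : ∀ x y, U x y = U y x) (hWsymm : ∀ x y, W x y = W y x)
    (hU01 : ∀ x y, U x y ∈ Set.Icc (0 : ℝ) 1) (hW01 : ∀ x y, W x y ∈ Set.Icc (0 : ℝ) 1)
    (TU TW S : Lp ℝ 2 (volume : Measure unitInterval) →L[ℝ]
      Lp ℝ 2 (volume : Measure unitInterval))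
    (hTU : ∀ f : Lp ℝ 2 (volume : Measure unitInterval),
      ⇑(TU f) =ᵐ[volume] fun x => ∫ y, U x y * f y)
    (hTW : ∀ f : Lp ℝ 2 (volume : Measure unitInterval),
      ⇑(TW f) =ᵐ[volume] fun x => ∫ y, W x y * f y)
    (hS1 : S oneL2 = oneL2)
    (hSadj1 : ContinuousLinearMap.adjoint S oneL2 = oneL2)
    (ℓ : ℕ) :
    |(inner ℝ oneL2 ((TU ^ ℓ) oneL2) : ℝ) - (inner ℝ oneL2 ((TW ^ ℓ) oneL2) : ℝ)| ≤
      (ℓ : ℝ) * ⨆ fg : box × box,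
        |(inner ℝ (fg.1.1) ((TU ∘L S - S ∘L TW) fg.2.1) : ℝ)| := by
  set D := TU ∘L S - S ∘L TW with hD
  set s : ℝ := ⨆ fg : box × box, |(inner ℝ (fg.1.1) (D fg.2.1) : ℝ)| with hs
  -- the family is bounded above by ‖D‖
  have hbdd : BddAbove (Set.range fun fg : box × box =>
      |(inner ℝ (fg.1.1) (D fg.2.1) : ℝ)|) := by
    refine ⟨‖D‖, ?_⟩
    rintro r ⟨fg, rfl⟩
    calc |(inner ℝ (fg.1.1) (D fg.2.1) : ℝ)| ≤ ‖fg.1.1‖ * ‖D fg.2.1‖ := abs_real_inner_le_norm _ _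
      _ ≤ 1 * (‖D‖ * 1) := by
          apply mul_le_mul (box_norm_le_one _ fg.1.2) ?_ (norm_nonneg _) zero_le_one
          calc ‖D fg.2.1‖ ≤ ‖D‖ * ‖fg.2.1‖ := D.le_opNorm _
            _ ≤ ‖D‖ * 1 := by
                exact mul_le_mul_of_nonneg_left (box_norm_le_one _ fg.2.2) (norm_nonneg _)
      _ = ‖D‖ := by ring
  have hle : ∀ (f g : Lp ℝ 2 μ01) (hf : ∀ᵐ x ∂μ01, f x ∈ Set.Icc (0:ℝ) 1)
      (hg : ∀ᵐ x ∂μ01, g x ∈ Set.Icc (0:ℝ) 1), |(inner ℝ f (D g) : ℝ)| ≤ s := by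
    intro f g hf hg
    exact le_ciSup hbdd (⟨⟨f, hf⟩, ⟨g, hg⟩⟩ : box × box)
  have hs0 : 0 ≤ s := le_trans (abs_nonneg _) (hle oneL2 oneL2 oneL2_box oneL2_box)
  -- powers of TW applied to 1 stay in the box
  have hWpow : ∀ n : ℕ, ∀ᵐ x ∂μ01, ((TW ^ n) oneL2) x ∈ Set.Icc (0:ℝ) 1 := by
    intro n
    induction n with
    | zero => simpa using oneL2_box
    | succ n ih =>
        have : (TW ^ (n+1)) oneL2 = TW ((TW ^ n) oneL2) := by
          rw [pow_succ']; rfl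
        rw [this]
        exact mapsBox hW01 hTW ih
  -- key induction
  have key : ∀ n : ℕ, ∀ f : Lp ℝ 2 μ01, (∀ᵐ x ∂μ01, f x ∈ Set.Icc (0:ℝ) 1) →
      |(inner ℝ f ((TU ^ n) (S oneL2)) : ℝ) - (inner ℝ f (S ((TW ^ n) oneL2)) : ℝ)| ≤ n * s := by
    intro n
    induction n with
    | zero => intro f hf; simp
    | succ n ih =>
        intro f hf
        have e1 : (TU ^ (n+1)) (S oneL2) = TU ((TU ^ n) (S oneL2)) := by
          rw [pow_succ']; rfl
        have e2 : S ((TW ^ (n+1)) oneL2) = S (TW ((TW ^ n) oneL2)) := by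
          rw [pow_succ']; rfl
        set a := (TU ^ n) (S oneL2)
        set c := (TW ^ n) oneL2
        have split : (inner ℝ f ((TU ^ (n+1)) (S oneL2)) : ℝ) -
            (inner ℝ f (S ((TW ^ (n+1)) oneL2)) : ℝ) =
            ((inner ℝ (TU f) a : ℝ) - (inner ℝ (TU f) (S c) : ℝ)) + (inner ℝ f (D c) : ℝ) := by
          rw [e1, e2]
          have h1 : (inner ℝ f (TU a) : ℝ) = inner ℝ (TU f) a :=
            (symmSelfAdj hUmeas hU01 hUsymm hTU f a).symm
          have h2 : (inner ℝ f (TU (S c)) : ℝ) = inner ℝ (TU f) (S c) :=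
            (symmSelfAdj hUmeas hU01 hUsymm hTU f (S c)).symm
          have h3 : (inner ℝ f (D c) : ℝ) = (inner ℝ f (TU (S c)) : ℝ) - inner ℝ f (S (TW c)) := by
            rw [hD]
            simp [inner_sub_right]
          rw [← h1, ← h2]
          linarith [h3]
        rw [split]
        have hTUf : ∀ᵐ x ∂μ01, (TU f) x ∈ Set.Icc (0:ℝ) 1 := mapsBox hU01 hTU hf
        have ih' := ih (TU f) hTUf
        have h4 := hle f c hf (hWpow n)
        calc |((inner ℝ (TU f) a : ℝ) - (inner ℝ (TU f) (S c) : ℝ)) + (inner ℝ f (D c) : ℝ)|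
            ≤ |(inner ℝ (TU f) a : ℝ) - (inner ℝ (TU f) (S c) : ℝ)| + |(inner ℝ f (D c) : ℝ)| :=
              abs_add_le _ _
          _ ≤ n * s + s := add_le_add ih' h4
          _ = (n + 1 : ℕ) * s := by push_cast; ring
  have h1 : (inner ℝ oneL2 ((TU ^ ℓ) oneL2) : ℝ) = inner ℝ oneL2 ((TU ^ ℓ) (S oneL2)) := by
    rw [hS1]
  have h2 : (inner ℝ oneL2 ((TW ^ ℓ) oneL2) : ℝ) = inner ℝ oneL2 (S ((TW ^ ℓ) oneL2)) := by
    rw [← ContinuousLinearMap.adjoint_inner_left S ((TW ^ ℓ) oneL2) oneL2, hSadj1]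
  rw [h1, h2]
  exact key ℓ oneL2 oneL2_box
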